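/- On S̃³ = ∂(𝔻²×𝔻²), the matrix function fᴱ defined by fᴱ(z,w) = [[z, −w⁻¹],[−w|z|² + 2w, z̄]] for (z,w) ∈ 𝔻²×𝕋 and fᴱ(z,w) = [[−z|w|² + 2z, −w̄],[w, z⁻¹]] for (z,w) ∈ 𝕋×𝔻² is well-defined (the two formulas agree on 𝕋²), continuous, and invertible at every point; moreover fᴱ is homotopic through continuous maps S̃³ → GL₂(ℂ) to g(z,w) = [[z, −w̄],[w, z̄]]. -/

import Mathlib

/-- The three-sphere `S̃³ = ∂(𝔻² × 𝔻²) = (𝔻² × 𝕋) ∪ (𝕋 × 𝔻²) ⊂ ℂ²`. -/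
def SThree : Set (ℂ × ℂ) := {p : ℂ × ℂ | max ‖p.1‖ ‖p.2‖ = 1}

/-- The formula for `fᴱ` on the piece `𝔻² × 𝕋`. -/
noncomputable def fEdiskCirc (p : ℂ × ℂ) : Matrix (Fin 2) (Fin 2) ℂ :=
  !![p.1, -p.2⁻¹; -p.2 * (‖p.1‖ : ℂ) ^ 2 + 2 * p.2, starRingEnd ℂ p.1]

/-- The formula for `fᴱ` on the piece `𝕋 × 𝔻²`. -/
noncomputable def fEcircDisk (p : ℂ × ℂ) : Matrix (Fin 2) (Fin 2) ℂ :=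
  !![-p.1 * (‖p.2‖ : ℂ) ^ 2 + 2 * p.1, -(starRingEnd ℂ p.2); p.2, p.1⁻¹]

open Classical in
/-- The glued map `fᴱ` on `S̃³`, given by the first formula on `𝔻² × 𝕋` and by the second
on `𝕋 × 𝔻²`. -/
noncomputable def fE (p : ℂ × ℂ) : Matrix (Fin 2) (Fin 2) ℂ :=
  if ‖p.2‖ = 1 then fEdiskCirc p else fEcircDisk p

/-- The map `g(z,w) = [[z, −w̄],[w, z̄]]`. -/
def gBott (p : ℂ × ℂ) : Matrix (Fin 2) (Fin 2) ℂ :=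
  !![p.1, -(starRingEnd ℂ p.2); p.2, starRingEnd ℂ p.1]

/-- The linear homotopy between `gBott` and `fE`. -/
noncomputable def Fhom (t : ℝ) (p : ℂ × ℂ) : Matrix (Fin 2) (Fin 2) ℂ :=
  !![p.1 * (1 + (t : ℂ) * (1 - (‖p.2‖ : ℂ) ^ 2)), -(starRingEnd ℂ p.2);
     p.2 * (1 + (t : ℂ) * (1 - (‖p.1‖ : ℂ) ^ 2)), starRingEnd ℂ p.1]

lemma mul_conj_norm (z : ℂ) : z * starRingEnd ℂ z = ((‖z‖ : ℂ)) ^ 2 := by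
  rw [Complex.mul_conj, Complex.normSq_eq_norm_sq]; norm_cast

lemma Fhom_continuous : Continuous (fun q : ℝ × (ℂ × ℂ) => Fhom q.1 q.2) := by
  have hR : Continuous fun q : ℝ × (ℂ × ℂ) => ((q.1 : ℂ)) :=
    Complex.continuous_ofReal.comp continuous_fst
  have h1 : Continuous fun q : ℝ × (ℂ × ℂ) => ((‖q.2.1‖ : ℂ)) :=
    Complex.continuous_ofReal.comp (continuous_norm.comp (continuous_snd.comp continuous_id).fst)
  have h2 : Continuous fun q : ℝ × (ℂ × ℂ) => ((‖q.2.2‖ : ℂ)) :=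
    Complex.continuous_ofReal.comp (continuous_norm.comp (continuous_snd.comp continuous_id).snd)
  have e11 : Continuous fun q : ℝ × (ℂ × ℂ) =>
      q.2.1 * (1 + (q.1 : ℂ) * (1 - (‖q.2.2‖ : ℂ) ^ 2)) :=
    continuous_snd.fst.mul (continuous_const.add (hR.mul (continuous_const.sub (h2.pow 2))))
  have e21 : Continuous fun q : ℝ × (ℂ × ℂ) =>
      q.2.2 * (1 + (q.1 : ℂ) * (1 - (‖q.2.1‖ : ℂ) ^ 2)) :=
    continuous_snd.snd.mul (continuous_const.add (hR.mul (continuous_const.sub (h1.pow 2))))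
  have e12 : Continuous fun q : ℝ × (ℂ × ℂ) => -(starRingEnd ℂ q.2.2) :=
    (continuous_star.comp continuous_snd.snd).neg
  have e22 : Continuous fun q : ℝ × (ℂ × ℂ) => starRingEnd ℂ q.2.1 :=
    continuous_star.comp continuous_snd.fst
  apply continuous_matrix
  intro i j
  fin_cases i <;> fin_cases j <;> simp [Fhom]
  · exact e11
  · exact e12
  · exact e21
  · exact e22

lemma Fhom_det (t : ℝ) (p : ℂ × ℂ) :
    (Fhom t p).det =
      ((‖p.1‖ ^ 2 * (1 + t * (1 - ‖p.2‖ ^ 2)) + ‖p.2‖ ^ 2 * (1 + t * (1 - ‖p.1‖ ^ 2)) : ℝ) : ℂ) := by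
  rw [Fhom, Matrix.det_fin_two_of]
  have h1 := mul_conj_norm p.1
  have h2 := mul_conj_norm p.2
  push_cast
  linear_combination (1 + (t : ℂ) * (1 - (‖p.2‖ : ℂ) ^ 2)) * h1 +
    (1 + (t : ℂ) * (1 - (‖p.1‖ : ℂ) ^ 2)) * h2

lemma SThree_facts {p : ℂ × ℂ} (hp : p ∈ SThree) :
    ‖p.1‖ ≤ 1 ∧ ‖p.2‖ ≤ 1 ∧ (‖p.1‖ = 1 ∨ ‖p.2‖ = 1) := by
  have h : max ‖p.1‖ ‖p.2‖ = 1 := hp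
  refine ⟨h ▸ le_max_left _ _, h ▸ le_max_right _ _, ?_⟩
  rcases max_choice ‖p.1‖ ‖p.2‖ with hc | hc
  · exact Or.inl (hc ▸ h)
  · exact Or.inr (hc ▸ h)

lemma Fhom_isUnit {t : ℝ} (ht : t ∈ Set.Icc (0 : ℝ) 1) {p : ℂ × ℂ} (hp : p ∈ SThree) :
    IsUnit (Fhom t p) := by
  obtain ⟨ha, hb, hab⟩ := SThree_facts hp
  rw [Matrix.isUnit_iff_isUnit_det, isUnit_iff_ne_zero, Fhom_det]
  rw [Ne, Complex.ofReal_eq_zero]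
  obtain ⟨ht0, ht1⟩ := ht
  have ha0 : (0:ℝ) ≤ ‖p.1‖ := norm_nonneg _
  have hb0 : (0:ℝ) ≤ ‖p.2‖ := norm_nonneg _
  rcases hab with h | h
  · rw [h]
    have hbb : ‖p.2‖ ^ 2 ≤ 1 := by nlinarith
    nlinarith [mul_nonneg ht0 (by linarith : (0:ℝ) ≤ 1 - ‖p.2‖ ^ 2), sq_nonneg ‖p.2‖]
  · rw [h]
    have haa : ‖p.1‖ ^ 2 ≤ 1 := by nlinarith
    nlinarith [mul_nonneg ht0 (by linarith : (0:ℝ) ≤ 1 - ‖p.1‖ ^ 2), sq_nonneg ‖p.1‖]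

lemma Fhom_one_eq_fE {p : ℂ × ℂ} (hp : p ∈ SThree) : Fhom 1 p = fE p := by
  obtain ⟨ha, hb, hab⟩ := SThree_facts hp
  rw [fE]
  split_ifs with hw
  · have hw' : (‖p.2‖ : ℂ) = 1 := by rw [hw]; norm_num
    have hwA : ((‖p.2‖ : ℝ) : ℂ) = 1 := by
      exact hw'
    have hinv : p.2⁻¹ = starRingEnd ℂ p.2 := Complex.inv_eq_conj hw
    ext i j
    fin_cases i <;> fin_cases j <;>
      simp [Fhom, fEdiskCirc, hw', hwA, hinv] <;> ring
  · have hz : ‖p.1‖ = 1 := by tauto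
    have hz' : (‖p.1‖ : ℂ) = 1 := by rw [hz]; norm_num
    have hzA : ((‖p.1‖ : ℝ) : ℂ) = 1 := by
      exact hz'
    have hinv : p.1⁻¹ = starRingEnd ℂ p.1 := Complex.inv_eq_conj hz
    ext i j
    fin_cases i <;> fin_cases j <;>
      simp [Fhom, fEcircDisk, hz', hzA, hinv] <;> ring

/-- The extended symbol `fᴱ` on `S̃³ = ∂(𝔻²×𝔻²)` is well defined (the two defining
formulas agree on `𝕋²`), continuous, invertible at every point, and homotopic through
continuous invertible-matrix-valued maps on `S̃³` to `g(z,w) = [[z, −w̄],[w, z̄]]`. -/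
theorem fE_welldef_invertible_homotopic_to_g :
    (∀ p : ℂ × ℂ, ‖p.1‖ = 1 → ‖p.2‖ = 1 → fEdiskCirc p = fEcircDisk p) ∧
    ContinuousOn fE SThree ∧
    (∀ p ∈ SThree, IsUnit (fE p)) ∧
    ∃ F : ℝ → ℂ × ℂ → Matrix (Fin 2) (Fin 2) ℂ,
      ContinuousOn (fun q : ℝ × (ℂ × ℂ) => F q.1 q.2) (Set.Icc (0 : ℝ) 1 ×ˢ SThree) ∧
      (∀ p ∈ SThree, F 1 p = fE p) ∧
      (∀ p ∈ SThree, F 0 p = gBott p) ∧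
      (∀ t ∈ Set.Icc (0 : ℝ) 1, ∀ p ∈ SThree, IsUnit (F t p)) := by
  have hwd : ∀ p : ℂ × ℂ, ‖p.1‖ = 1 → ‖p.2‖ = 1 → fEdiskCirc p = fEcircDisk p := by
    intro p hz hw
    have hz' : (‖p.1‖ : ℂ) = 1 := by rw [hz]; norm_num
    have hw' : (‖p.2‖ : ℂ) = 1 := by rw [hw]; norm_num
    have hzA : ((‖p.1‖ : ℝ) : ℂ) = 1 := by
      exact hz'
    have hwA : ((‖p.2‖ : ℝ) : ℂ) = 1 := by
      exact hw'
    have hiz : p.1⁻¹ = starRingEnd ℂ p.1 := Complex.inv_eq_conj hz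
    have hiw : p.2⁻¹ = starRingEnd ℂ p.2 := Complex.inv_eq_conj hw
    ext i j
    fin_cases i <;> fin_cases j <;>
      simp [fEdiskCirc, fEcircDisk, hz', hw', hzA, hwA, hiz, hiw] <;> ring
  have hF0 : ∀ p : ℂ × ℂ, Fhom 0 p = gBott p := by
    intro p
    ext i j
    fin_cases i <;> fin_cases j <;> simp [Fhom, gBott]
  refine ⟨hwd, ?_, ?_, Fhom, Fhom_continuous.continuousOn, fun p hp => Fhom_one_eq_fE hp,
    fun p _ => hF0 p, fun t ht p hp => Fhom_isUnit ht hp⟩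
  · exact ((Fhom_continuous.comp (continuous_const.prodMk continuous_id)).continuousOn).congr
      fun p hp => (Fhom_one_eq_fE hp).symm
  · exact fun p hp => (Fhom_one_eq_fE hp) ▸ Fhom_isUnit ⟨zero_le_one, le_refl 1⟩ hp
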